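/- Let G be a countably infinite group and suppose V ⊆ G is a set of operatorial recurrence. If V = V₁ ∪ V₂, then at least one of V₁, V₂ is a set of operatorial recurrence. -/

import Mathlib

/-- `V` is a set of operatorial recurrence in `G`: for every unitary representation `π`
of `G` on a separable Hilbert space and every vector `ξ` with `⟨π(v)ξ, ξ⟩ = 0` for all
`v ∈ V`, the vector `ξ` is orthogonal to all `π(G)`-invariant vectors. -/
def IsOpRecurrenceSet (G : Type) [Group G] (V : Set G) : Prop :=
  ∀ (H : Type) (_ : NormedAddCommGroup H) (_ : InnerProductSpace ℂ H) (_ : CompleteSpace H)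
    (_ : SecondCountableTopology H),
    ∀ (π : G →* (H ≃ₗᵢ[ℂ] H)) (ξ : H),
      (∀ v ∈ V, (inner ℂ ((π v) ξ) ξ : ℂ) = 0) →
      ∀ η : H, (∀ g : G, (π g) η = η) → (inner ℂ ξ η : ℂ) = 0

open scoped ENNReal ComplexConjugate

noncomputable section OpRecAux

namespace OpRecAux

variable {ι κ : Type}

local notation "ℓ²(" ι ")" => lp (fun _ : ι => ℂ) (2 : ℝ≥0∞)

lemma two_ne_top : (2 : ℝ≥0∞) ≠ ⊤ := by norm_num

lemma toReal_two : (2 : ℝ≥0∞).toReal = 2 := by norm_num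

lemma toReal_pos : 0 < (2 : ℝ≥0∞).toReal := by norm_num

lemma lp2_summable (f : ℓ²(ι)) : Summable fun i => ‖f i‖ ^ (2 : ℝ) := by
  have h := (lp.memℓp f).summable toReal_pos
  rwa [toReal_two] at h

lemma memℓp_two {f : ι → ℂ} (h : Summable fun i => ‖f i‖ ^ (2 : ℝ)) : Memℓp f 2 :=
  memℓp_gen (by rw [toReal_two]; exact h)

lemma norm_rpow (f : ℓ²(ι)) : ‖f‖ ^ (2 : ℝ) = ∑' i, ‖f i‖ ^ (2 : ℝ) := by
  have h := lp.norm_rpow_eq_tsum toReal_pos f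
  rwa [toReal_two] at h

lemma inner_eq (f g : ℓ²(ι)) : (inner ℂ f g : ℂ) = ∑' i, conj (f i) * g i := by
  rw [lp.inner_eq_tsum]
  simp [RCLike.inner_apply, mul_comm]

/-- The slice of an element of `ℓ²(ι × κ)` at `i : ι`. -/
def slice (f : ℓ²(ι × κ)) (i : ι) : ℓ²(κ) :=
  ⟨fun j => f (i, j), memℓp_two ((lp2_summable f).prod_factor i)⟩

@[simp] lemma slice_apply (f : ℓ²(ι × κ)) (i : ι) (j : κ) : slice f i j = f (i, j) := rfl

lemma norm_eq_of_rpow_eq {E F : Type} [NormedAddCommGroup E] [NormedAddCommGroup F]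
    {x : E} {y : F} (h : ‖x‖ ^ (2 : ℝ) = ‖y‖ ^ (2 : ℝ)) : ‖x‖ = ‖y‖ := by
  have h2 : ((2 : ℝ)) ≠ 0 := by norm_num
  exact Real.rpow_left_injOn h2 (norm_nonneg x) (norm_nonneg y) h

variable (ι) in
/-- Apply a unitary of `ℓ²(κ)` to each slice of an element of `ℓ²(ι × κ)`. -/
def RmapFun (V : ℓ²(κ) ≃ₗᵢ[ℂ] ℓ²(κ)) (f : ℓ²(ι × κ)) : (ι × κ) → ℂ :=
  fun p => V (slice f p.1) p.2

lemma Rmap_mem (V : ℓ²(κ) ≃ₗᵢ[ℂ] ℓ²(κ)) (f : ℓ²(ι × κ)) : Memℓp (RmapFun ι V f) 2 := by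
  apply memℓp_two
  have hnn : (0 : (ι × κ) → ℝ) ≤ fun p => ‖RmapFun ι V f p‖ ^ (2 : ℝ) := by
    intro p; exact Real.rpow_nonneg (norm_nonneg _) _
  rw [summable_prod_of_nonneg hnn]
  constructor
  · intro i
    exact lp2_summable (V (slice f i))
  · have key : ∀ i : ι, (∑' j, ‖RmapFun ι V f (i, j)‖ ^ (2 : ℝ))
        = ∑' j, ‖f (i, j)‖ ^ (2 : ℝ) := by
      intro i
      have h1 : (∑' j, ‖RmapFun ι V f (i, j)‖ ^ (2 : ℝ)) = ‖V (slice f i)‖ ^ (2 : ℝ) :=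
        (norm_rpow (V (slice f i))).symm
      rw [h1, V.norm_map, norm_rpow]
      rfl
    have h2 : Summable fun i => ∑' j, ‖f (i, j)‖ ^ (2 : ℝ) := (lp2_summable f).prod
    exact h2.congr fun i => (key i).symm

/-- `Rmap` as a bare function `ℓ²(ι × κ) → ℓ²(ι × κ)`. -/
def Rmap (V : ℓ²(κ) ≃ₗᵢ[ℂ] ℓ²(κ)) (f : ℓ²(ι × κ)) : ℓ²(ι × κ) :=
  ⟨RmapFun ι V f, Rmap_mem V f⟩

@[simp] lemma Rmap_apply (V : ℓ²(κ) ≃ₗᵢ[ℂ] ℓ²(κ)) (f : ℓ²(ι × κ)) (p : ι × κ) :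
    Rmap V f p = V (slice f p.1) p.2 := rfl

lemma slice_Rmap (V : ℓ²(κ) ≃ₗᵢ[ℂ] ℓ²(κ)) (f : ℓ²(ι × κ)) (i : ι) :
    slice (Rmap V f) i = V (slice f i) := by
  apply lp.ext
  funext j
  rfl

lemma slice_add (f g : ℓ²(ι × κ)) (i : ι) :
    slice (f + g) i = slice f i + slice g i := by
  apply lp.ext
  funext j
  simp [lp.coeFn_add, Pi.add_apply]

lemma slice_smul (c : ℂ) (f : ℓ²(ι × κ)) (i : ι) :
    slice (c • f) i = c • slice f i := by
  apply lp.ext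
  funext j
  simp [lp.coeFn_smul, Pi.smul_apply]

lemma Rmap_norm (V : ℓ²(κ) ≃ₗᵢ[ℂ] ℓ²(κ)) (f : ℓ²(ι × κ)) : ‖Rmap V f‖ = ‖f‖ := by
  apply norm_eq_of_rpow_eq
  rw [norm_rpow, norm_rpow]
  have hR : Summable fun p : ι × κ => ‖Rmap V f p‖ ^ (2 : ℝ) := lp2_summable (Rmap V f)
  have hf : Summable fun p : ι × κ => ‖f p‖ ^ (2 : ℝ) := lp2_summable f
  rw [Summable.tsum_prod' hR fun i => hR.prod_factor i, Summable.tsum_prod' hf fun i => hf.prod_factor i]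
  congr 1
  funext i
  have h1 : (∑' j, ‖Rmap V f (i, j)‖ ^ (2 : ℝ)) = ‖V (slice f i)‖ ^ (2 : ℝ) :=
    (norm_rpow (V (slice f i))).symm
  rw [h1, V.norm_map, norm_rpow]
  rfl

/-- Tensoring a unitary of `ℓ²(κ)` with the identity (in slice form). -/
def tensorR (V : ℓ²(κ) ≃ₗᵢ[ℂ] ℓ²(κ)) : ℓ²(ι × κ) ≃ₗᵢ[ℂ] ℓ²(ι × κ) where
  toLinearEquiv :=
    { toFun := Rmap V
      invFun := Rmap V.symm
      map_add' := by
        intro f g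
        apply lp.ext
        funext p
        simp only [Rmap_apply, lp.coeFn_add, Pi.add_apply, slice_add, map_add]
      map_smul' := by
        intro c f
        apply lp.ext
        funext p
        simp only [Rmap_apply, lp.coeFn_smul, Pi.smul_apply, slice_smul, map_smul,
          RingHom.id_apply]
      left_inv := by
        intro f
        apply lp.ext
        funext p
        simp only [Rmap_apply, slice_Rmap, LinearIsometryEquiv.symm_apply_apply]
        rfl
      right_inv := by
        intro f
        apply lp.ext
        funext p
        simp only [Rmap_apply, slice_Rmap, LinearIsometryEquiv.apply_symm_apply]
        rfl }
  norm_map' := Rmap_norm V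

@[simp] lemma tensorR_apply (V : ℓ²(κ) ≃ₗᵢ[ℂ] ℓ²(κ)) (f : ℓ²(ι × κ)) (p : ι × κ) :
    tensorR V f p = V (slice f p.1) p.2 := rfl

/-- Reindexing `ℓ²` along an equivalence of index types. -/
def lpCongr (e : ι ≃ κ) : ℓ²(ι) ≃ₗᵢ[ℂ] ℓ²(κ) where
  toLinearEquiv :=
    { toFun := fun f => ⟨fun j => f (e.symm j),
        memℓp_two ((e.symm.summable_iff (f := fun i => ‖f i‖ ^ (2:ℝ))).2 (lp2_summable f))⟩
      invFun := fun g => ⟨fun i => g (e i),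
        memℓp_two ((e.summable_iff (f := fun j => ‖g j‖ ^ (2:ℝ))).2 (lp2_summable g))⟩
      map_add' := by
        intro f g
        apply lp.ext
        funext j
        simp [lp.coeFn_add, Pi.add_apply]
        rfl
      map_smul' := by
        intro c f
        apply lp.ext
        funext j
        simp [lp.coeFn_smul, Pi.smul_apply]
      left_inv := by
        intro f
        apply lp.ext
        funext i
        simp
      right_inv := by
        intro g
        apply lp.ext
        funext j
        simp }
  norm_map' := by
    intro f
    apply norm_eq_of_rpow_eq
    rw [norm_rpow, norm_rpow]
    exact e.symm.tsum_eq fun i => ‖f i‖ ^ (2:ℝ)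

@[simp] lemma lpCongr_apply (e : ι ≃ κ) (f : ℓ²(ι)) (j : κ) :
    lpCongr e f j = f (e.symm j) := rfl

/-- Elementary tensors in `ℓ²(ι × κ)`. -/
def tElem (x : ℓ²(ι)) (y : ℓ²(κ)) : ℓ²(ι × κ) :=
  ⟨fun p => x p.1 * y p.2, memℓp_two <| by
    have h := ((lp2_summable x).mul_of_nonneg (lp2_summable y)
      (fun i => Real.rpow_nonneg (norm_nonneg _) _)
      (fun j => Real.rpow_nonneg (norm_nonneg _) _))
    refine h.congr fun p => ?_
    rw [norm_mul, Real.mul_rpow (norm_nonneg _) (norm_nonneg _)]⟩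

@[simp] lemma tElem_apply (x : ℓ²(ι)) (y : ℓ²(κ)) (p : ι × κ) :
    tElem x y p = x p.1 * y p.2 := rfl

lemma summable_norm_mul (x u : ℓ²(ι)) : Summable fun i => ‖x i‖ * ‖u i‖ := by
  refine Summable.of_nonneg_of_le (fun i => mul_nonneg (norm_nonneg _) (norm_nonneg _))
    (fun i => ?_) ((lp2_summable x).add (lp2_summable u))
  have hx : ‖x i‖ ^ (2:ℝ) = ‖x i‖ ^ (2:ℕ) := by
    rw [← Real.rpow_natCast]; norm_num
  have hu : ‖u i‖ ^ (2:ℝ) = ‖u i‖ ^ (2:ℕ) := by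
    rw [← Real.rpow_natCast]; norm_num
  simp only [Pi.add_apply]
  rw [hx, hu]
  nlinarith [sq_nonneg (‖x i‖ - ‖u i‖), norm_nonneg (x i), norm_nonneg (u i)]

lemma inner_tElem (x u : ℓ²(ι)) (y v : ℓ²(κ)) :
    (inner ℂ (tElem x y) (tElem u v) : ℂ) = (inner ℂ x u : ℂ) * (inner ℂ y v : ℂ) := by
  rw [inner_eq, inner_eq, inner_eq]
  have hx : Summable fun i => ‖conj (x i) * u i‖ := by
    refine (summable_norm_mul x u).congr fun i => ?_
    rw [norm_mul, RCLike.norm_conj]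
  have hy : Summable fun j => ‖conj (y j) * v j‖ := by
    refine (summable_norm_mul y v).congr fun j => ?_
    rw [norm_mul, RCLike.norm_conj]
  rw [tsum_mul_tsum_of_summable_norm hx hy]
  refine tsum_congr fun p => ?_
  simp only [tElem_apply, map_mul]
  ring

lemma tensorR_tElem (V : ℓ²(κ) ≃ₗᵢ[ℂ] ℓ²(κ)) (x : ℓ²(ι)) (y : ℓ²(κ)) :
    tensorR V (tElem x y) = tElem x (V y) := by
  apply lp.ext
  funext p
  have hs : slice (tElem x y) p.1 = x p.1 • y := by
    apply lp.ext
    funext j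
    simp [lp.coeFn_smul, Pi.smul_apply, smul_eq_mul]
  show V (slice (tElem x y) p.1) p.2 = x p.1 * V y p.2
  rw [hs, map_smul]
  simp [lp.coeFn_smul, Pi.smul_apply, smul_eq_mul]

lemma lpCongr_prodComm_tElem (x : ℓ²(ι)) (y : ℓ²(κ)) :
    lpCongr (Equiv.prodComm ι κ) (tElem x y) = tElem y x := by
  apply lp.ext
  funext p
  simp [Equiv.prodComm, mul_comm]

/-- The tensor product `U ⊗ V` of two unitaries, acting on `ℓ²(ι × κ)`. -/
def tensorOp (U : ℓ²(ι) ≃ₗᵢ[ℂ] ℓ²(ι)) (V : ℓ²(κ) ≃ₗᵢ[ℂ] ℓ²(κ)) :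
    ℓ²(ι × κ) ≃ₗᵢ[ℂ] ℓ²(ι × κ) :=
  ((tensorR V).trans (lpCongr (Equiv.prodComm ι κ))).trans
    ((tensorR U).trans (lpCongr (Equiv.prodComm κ ι)))

lemma tensorOp_tElem (U : ℓ²(ι) ≃ₗᵢ[ℂ] ℓ²(ι)) (V : ℓ²(κ) ≃ₗᵢ[ℂ] ℓ²(κ))
    (x : ℓ²(ι)) (y : ℓ²(κ)) :
    tensorOp U V (tElem x y) = tElem (U x) (V y) := by
  unfold tensorOp
  simp only [LinearIsometryEquiv.trans_apply]
  rw [tensorR_tElem, lpCongr_prodComm_tElem, tensorR_tElem, lpCongr_prodComm_tElem]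

lemma single_eq_tElem [DecidableEq ι] [DecidableEq κ] (i : ι) (j : κ) :
    lp.single 2 (⟨i, j⟩ : ι × κ) (1 : ℂ) = tElem (lp.single 2 i 1) (lp.single 2 j 1) := by
  apply lp.ext
  funext p
  rcases p with ⟨pi, pj⟩
  by_cases h1 : pi = i
  · subst h1
    by_cases h2 : pj = j
    · subst h2
      simp [lp.single_apply_self]
    · have : (⟨pi, pj⟩ : ι × κ) ≠ ⟨pi, j⟩ := by
        simp [Prod.ext_iff, h2]
      simp [lp.single_apply_ne _ _ _ this, lp.single_apply_ne _ _ _ h2,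
        lp.single_apply_self, Pi.single_apply, h2]
  · have : (⟨pi, pj⟩ : ι × κ) ≠ ⟨i, j⟩ := by
      simp [Prod.ext_iff, h1]
    simp [lp.single_apply_ne _ _ _ this, lp.single_apply_ne _ _ _ h1, Pi.single_apply, h1]

/-- Two linear isometry equivalences of `ℓ²(ι)` agreeing on all "basis vectors"
`lp.single 2 i 1` are equal. -/
lemma ext_of_single [DecidableEq ι] {T S : ℓ²(ι) ≃ₗᵢ[ℂ] ℓ²(ι)}
    (h : ∀ i, T (lp.single 2 i (1 : ℂ)) = S (lp.single 2 i 1)) : T = S := by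
  have key : ∀ f : ℓ²(ι), T f = S f := by
    intro f
    have hs := lp.hasSum_single two_ne_top f
    have hsingle : ∀ i, (lp.single 2 i (f i) : ℓ²(ι)) = f i • lp.single 2 i (1 : ℂ) := by
      intro i
      rw [← lp.single_smul (E := fun _ : ι => ℂ) (𝕜 := ℂ) 2 i (f i) (1 : ℂ), smul_eq_mul, mul_one]
    have hT : HasSum (fun i => T (lp.single 2 i (f i))) (T f) := by
      have := T.toLinearIsometry.toContinuousLinearMap.hasSum hs
      simpa using this
    have hS : HasSum (fun i => S (lp.single 2 i (f i))) (S f) := by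
      have := S.toLinearIsometry.toContinuousLinearMap.hasSum hs
      simpa using this
    have heq : (fun i => T (lp.single 2 i (f i))) = fun i => S (lp.single 2 i (f i)) := by
      funext i
      rw [hsingle i, map_smul, map_smul, h i]
    rw [heq] at hT
    exact hT.unique hS
  exact LinearIsometryEquiv.ext key

/-- `ℓ²(ι)` is second countable for countable `ι`. -/
lemma secondCountable_lp [Countable ι] :
    SecondCountableTopology ℓ²(ι) := by
  classical
  have hsep : TopologicalSpace.SeparableSpace ℓ²(ι) := by
    rw [← TopologicalSpace.isSeparable_univ_iff]
    have h1 : TopologicalSpace.IsSeparable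
        (Set.range fun i : ι => lp.single 2 i (1 : ℂ)) :=
      (Set.countable_range _).isSeparable
    refine (h1.span (R := ℂ)).closure.mono ?_
    intro f _
    have hs := lp.hasSum_single two_ne_top f
    refine mem_closure_of_tendsto hs ?_
    filter_upwards with s
    refine Submodule.sum_mem _ fun i _ => ?_
    have : (lp.single 2 i (f i) : ℓ²(ι)) = f i • lp.single 2 i (1 : ℂ) := by
      rw [← lp.single_smul (E := fun _ : ι => ℂ) (𝕜 := ℂ) 2 i (f i) (1 : ℂ), smul_eq_mul, mul_one]
    rw [this]
    exact Submodule.smul_mem _ _ (Submodule.subset_span ⟨i, rfl⟩)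
  exact UniformSpace.secondCountable_of_separable _

/-- Any orthonormal family in a second countable inner product space has countable
index type. -/
lemma countable_of_orthonormal {H : Type} [NormedAddCommGroup H] [InnerProductSpace ℂ H]
    [SecondCountableTopology H] {α : Type} {v : α → H} (hv : Orthonormal ℂ v) :
    Countable α := by
  obtain ⟨D, hDc, hDd⟩ := TopologicalSpace.exists_countable_dense H
  have sep : ∀ a : α, ∃ d, d ∈ D ∧ dist (v a) d < 0.7 := by
    intro a
    obtain ⟨d, hd, hdd⟩ := hDd.exists_dist_lt (v a) (by norm_num : (0:ℝ) < 0.7)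
    exact ⟨d, hd, hdd⟩
  choose d hd hdist using sep
  haveI : Countable D := hDc.to_subtype
  refine Function.Injective.countable
    (f := fun a : α => (⟨d a, hd a⟩ : D)) fun a a' hda => ?_
  by_contra hne
  have hdd : d a = d a' := congrArg Subtype.val hda
  have hsq : ‖v a - v a'‖ ^ 2 = 2 := by
    rw [@norm_sub_sq ℂ]
    have h1 : ‖v a‖ = 1 := hv.1 a
    have h2 : ‖v a'‖ = 1 := hv.1 a'
    have h0 : (inner ℂ (v a) (v a') : ℂ) = 0 := hv.2 hne
    rw [h1, h2, h0]
    norm_num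
  have hle : dist (v a) (v a') < 1.4 := by
    calc dist (v a) (v a') ≤ dist (v a) (d a) + dist (d a) (v a') := dist_triangle _ _ _
    _ < 0.7 + 0.7 := by
        refine add_lt_add (hdist a) ?_
        rw [hdd, dist_comm]
        exact hdist a'
    _ = 1.4 := by norm_num
  rw [dist_eq_norm] at hle
  nlinarith [norm_nonneg (v a - v a')]

/-- Conjugating a unitary representation by a Hilbert basis isomorphism, to get a
representation on `ℓ²(I)`. -/
def baseRep {H : Type} [NormedAddCommGroup H] [InnerProductSpace ℂ H] [CompleteSpace H]
    {I : Type} (b : HilbertBasis I ℂ H) {G : Type} [Group G] (π : G →* (H ≃ₗᵢ[ℂ] H)) :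
    G →* (ℓ²(I) ≃ₗᵢ[ℂ] ℓ²(I)) :=
  MonoidHom.mk' (fun g => (b.repr.symm.trans (π g)).trans b.repr) (by
    intro g h
    apply LinearIsometryEquiv.ext
    intro x
    simp [LinearIsometryEquiv.trans_apply, map_mul, LinearIsometryEquiv.coe_mul,
      Function.comp_apply, LinearIsometryEquiv.symm_apply_apply])

lemma baseRep_apply {H : Type} [NormedAddCommGroup H] [InnerProductSpace ℂ H] [CompleteSpace H]
    {I : Type} (b : HilbertBasis I ℂ H) {G : Type} [Group G] (π : G →* (H ≃ₗᵢ[ℂ] H))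
    (g : G) (x : H) : baseRep b π g (b.repr x) = b.repr ((π g) x) := by
  show b.repr ((π g) (b.repr.symm (b.repr x))) = b.repr ((π g) x)
  rw [b.repr.symm_apply_apply]

/-- The tensor product of two representations on `ℓ²` spaces. -/
def tensorRep {G : Type} [Group G] (ρ₁ : G →* (ℓ²(ι) ≃ₗᵢ[ℂ] ℓ²(ι)))
    (ρ₂ : G →* (ℓ²(κ) ≃ₗᵢ[ℂ] ℓ²(κ))) :
    G →* (ℓ²(ι × κ) ≃ₗᵢ[ℂ] ℓ²(ι × κ)) :=
  MonoidHom.mk' (fun g => tensorOp (ρ₁ g) (ρ₂ g)) (by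
    intro g h
    classical
    apply ext_of_single
    rintro ⟨i, j⟩
    rw [single_eq_tElem]
    simp only [map_mul, LinearIsometryEquiv.coe_mul, Function.comp_apply, tensorOp_tElem])

lemma tensorRep_apply {G : Type} [Group G] (ρ₁ : G →* (ℓ²(ι) ≃ₗᵢ[ℂ] ℓ²(ι)))
    (ρ₂ : G →* (ℓ²(κ) ≃ₗᵢ[ℂ] ℓ²(κ))) (g : G) (x : ℓ²(ι)) (y : ℓ²(κ)) :
    tensorRep ρ₁ ρ₂ g (tElem x y) = tElem (ρ₁ g x) (ρ₂ g y) :=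
  tensorOp_tElem _ _ _ _

end OpRecAux

open OpRecAux in
/-- If `V = V₁ ∪ V₂` is a set of operatorial recurrence, then so is `V₁` or `V₂`. -/
theorem opRecurrence_union (G : Type) [Group G] [Countable G] [Infinite G]
    (V V₁ V₂ : Set G) (hV : IsOpRecurrenceSet G V) (hU : V = V₁ ∪ V₂) :
    IsOpRecurrenceSet G V₁ ∨ IsOpRecurrenceSet G V₂ := by
  by_contra hc
  push_neg at hc
  obtain ⟨h1, h2⟩ := hc
  simp only [IsOpRecurrenceSet] at h1 h2
  push_neg at h1 h2
  obtain ⟨H₁, n1, p1, c1, s1, π₁, ξ₁, hξ₁, η₁, hinv₁, hne₁⟩ := h1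
  obtain ⟨H₂, n2, p2, c2, s2, π₂, ξ₂, hξ₂, η₂, hinv₂, hne₂⟩ := h2
  letI := n1; letI := p1; letI := c1; letI := s1
  letI := n2; letI := p2; letI := c2; letI := s2
  obtain ⟨w₁, b₁, -⟩ := exists_hilbertBasis ℂ H₁
  obtain ⟨w₂, b₂, -⟩ := exists_hilbertBasis ℂ H₂
  haveI : Countable ↥w₁ := countable_of_orthonormal b₁.orthonormal
  haveI : Countable ↥w₂ := countable_of_orthonormal b₂.orthonormal
  have key := hV (lp (fun _ : ↥w₁ × ↥w₂ => ℂ) 2) inferInstance inferInstance inferInstance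
    secondCountable_lp (tensorRep (baseRep b₁ π₁) (baseRep b₂ π₂))
    (tElem (b₁.repr ξ₁) (b₂.repr ξ₂))
    ?_ (tElem (b₁.repr η₁) (b₂.repr η₂)) ?_
  · rw [inner_tElem, b₁.repr.inner_map_map, b₂.repr.inner_map_map] at key
    exact mul_ne_zero hne₁ hne₂ key
  · intro v hv
    rw [tensorRep_apply, baseRep_apply, baseRep_apply, inner_tElem,
      b₁.repr.inner_map_map, b₂.repr.inner_map_map]
    rw [hU] at hv
    rcases hv with hv | hv
    · rw [hξ₁ v hv, zero_mul]
    · rw [hξ₂ v hv, mul_zero]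
  · intro g
    rw [tensorRep_apply, baseRep_apply, baseRep_apply, hinv₁ g, hinv₂ g]
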